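/- Let τ be a finite type over Ω, let f ∈ Ω_{τ→τ} and x ∈ Ω_τ be hereditarily positive. Then for all countable ordinals α and γ: Iter_α^τ f (Iter_γ^τ f x) =hp Iter_{γ+α}^τ f x, where γ+α is ordinal addition. -/

import Mathlib

/-!  Framework: finite type structure over Ω = countable ordinals,
     limsup/liminf, transfinite iteration functionals, hereditarily
     positive and hereditarily monotone functionals. -/

noncomputable section
namespace IterOrd

open Ordinal

theorem omega1_pos : (0 : Ordinal) < ω₁ := Ordinal.omega0_pos.trans Ordinal.omega0_lt_omega_one

/-- `Om` is Ω, the set of countable ordinals (ordinals `< ω₁`). -/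
abbrev Om : Type 1 := {o : Ordinal // o < ω₁}

/-- Infimum of a subset of Ω (the minimum for nonempty sets; `0` for `∅`). -/
def infOm (s : Set Om) : Om :=
  ⟨sInf (Subtype.val '' s), by
    rcases (Subtype.val '' s).eq_empty_or_nonempty with h | h
    · rw [h]; simpa using omega1_pos
    · obtain ⟨x, _, he⟩ := csInf_mem h
      exact he ▸ x.2⟩

/-- Supremum of a subset of Ω.  Whenever the supremum of the set exists in Ω
(in particular for every countable subset, by regularity of `ω₁`) this is the
genuine supremum; otherwise it takes a junk value. -/
def supOm (s : Set Om) : Om :=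
  if h : sSup (Subtype.val '' s) < ω₁ then ⟨sSup (Subtype.val '' s), h⟩ else ⟨0, omega1_pos⟩

/-- Finite types over the base type `o` (interpreted as Ω). -/
inductive Ty : Type
  | base : Ty
  | arrow : Ty → Ty → Ty
deriving DecidableEq

/-- The full type structure over Ω: `El base = Ω` and
`El (arrow σ τ)` is the set of all functions `El σ → El τ`. -/
@[reducible] def El : Ty → Type 1
  | .base => Om
  | .arrow σ τ => El σ → El τ

/-- The order on each `El σ`: the ordinal order at base type, pointwise at arrow types. -/
def Le : (σ : Ty) → El σ → El σ → Prop
  | .base => fun x y => x ≤ y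
  | .arrow σ τ => fun f g => ∀ x : El σ, Le τ (f x) (g x)

/-- Suprema, computed pointwise at function types. -/
def supEl : (σ : Ty) → Set (El σ) → El σ
  | .base => supOm
  | .arrow σ τ => fun S (x : El σ) => supEl τ ((fun f : El (.arrow σ τ) => f x) '' S)

/-- Infima, computed pointwise at function types. -/
def infEl : (σ : Ty) → Set (El σ) → El σ
  | .base => infOm
  | .arrow σ τ => fun S (x : El σ) => infEl τ ((fun f : El (.arrow σ τ) => f x) '' S)

/-- `limsup_{ξ→ζ} f ξ = inf_{γ<ζ} sup_{γ≤ξ<ζ} f ξ`. -/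
def limsupEl (σ : Ty) (ζ : Ordinal) (f : ∀ ξ : Ordinal, ξ < ζ → El σ) : El σ :=
  infEl σ {y | ∃ γ, ∃ _ : γ < ζ, y = supEl σ {z | ∃ ξ, ∃ h : ξ < ζ, γ ≤ ξ ∧ z = f ξ h}}

/-- `liminf_{ξ→ζ} f ξ = sup_{γ<ζ} inf_{γ≤ξ<ζ} f ξ`. -/
def liminfEl (σ : Ty) (ζ : Ordinal) (f : ∀ ξ : Ordinal, ξ < ζ → El σ) : El σ :=
  supEl σ {y | ∃ γ, ∃ _ : γ < ζ, y = infEl σ {z | ∃ ξ, ∃ h : ξ < ζ, γ ≤ ξ ∧ z = f ξ h}}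

/-- `limsup` of a ζ-indexed sequence of ordinals. -/
def oLimsup (ζ : Ordinal) (a : Ordinal → Ordinal) : Ordinal :=
  sInf {s | ∃ γ, γ < ζ ∧ s = sSup (a '' {ξ | γ ≤ ξ ∧ ξ < ζ})}

/-- `liminf` of a ζ-indexed sequence of ordinals. -/
def oLiminf (ζ : Ordinal) (a : Ordinal → Ordinal) : Ordinal :=
  sSup {s | ∃ γ, γ < ζ ∧ s = sInf (a '' {ξ | γ ≤ ξ ∧ ξ < ζ})}

/-- The α-iteration functional of type σ:
`Iter 0 f x = x`, `Iter (α+1) f x = f (Iter α f x)`, and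
`Iter μ f x = limsup_{ξ→μ} Iter ξ f x` for limit μ. -/
def Iter (σ : Ty) (α : Ordinal) : (El σ → El σ) → El σ → El σ :=
  Ordinal.limitRecOn (motive := fun _ => (El σ → El σ) → El σ → El σ) α
    (fun _ x => x)
    (fun _ ih f x => f (ih f x))
    (fun μ _ ih f x => limsupEl σ μ (fun ξ h => ih ξ h f x))

/-- The pair (hereditarily positive, ≤hp), defined simultaneously by recursion on the type.
Every element of `Ω` and of `Ω_{ρ→τ}` with `ρ ≠ τ` is h.p., and `≤hp` there is `≤`;
`f : Ω_{τ→τ}` is h.p. iff it preserves h.p., is inflationary on h.p. arguments and is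
monotone (w.r.t. `≤hp`) on h.p. arguments; `f ≤hp f'` on `Ω_{τ→τ}` iff `f x ≤hp f' x`
for every h.p. `x`. -/
def HPaux : (σ : Ty) → (El σ → Prop) × (El σ → El σ → Prop)
  | .base => ⟨fun _ => True, fun x y => x ≤ y⟩
  | .arrow ρ τ =>
      ⟨fun f =>
        if h : ρ = τ then
          (∀ x, (HPaux ρ).1 x → (HPaux τ).1 (f x)) ∧
          (∀ x, (HPaux ρ).1 x → (HPaux τ).2 (cast (congrArg El h) x) (f x)) ∧
          (∀ x y, (HPaux ρ).1 x → (HPaux ρ).1 y → (HPaux ρ).2 x y → (HPaux τ).2 (f x) (f y))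
        else True,
       fun f g =>
        if ρ = τ then ∀ x, (HPaux ρ).1 x → (HPaux τ).2 (f x) (g x)
        else Le (.arrow ρ τ) f g⟩

/-- Hereditarily positive functionals. -/
def Hp (σ : Ty) : El σ → Prop := (HPaux σ).1

/-- The order `≤hp`. -/
def HpLe (σ : Ty) : El σ → El σ → Prop := (HPaux σ).2

/-- `f =hp g` iff `f ≤hp g` and `g ≤hp f`. -/
def HpEq (σ : Ty) (f g : El σ) : Prop := HpLe σ f g ∧ HpLe σ g f

/-- The pair (hereditarily monotone, ≤ on the hereditarily monotone structure),
by recursion on the type.  `f` is hereditarily monotone iff it maps hereditarily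
monotone arguments to hereditarily monotone values, monotonically; the order is
pointwise over hereditarily monotone arguments (i.e. the order of `Ω^mon`). -/
def HMaux : (σ : Ty) → (El σ → Prop) × (El σ → El σ → Prop)
  | .base => ⟨fun _ => True, fun x y => x ≤ y⟩
  | .arrow σ τ =>
      ⟨fun f =>
        (∀ x, (HMaux σ).1 x → (HMaux τ).1 (f x)) ∧
        (∀ x y, (HMaux σ).1 x → (HMaux σ).1 y → (HMaux σ).2 x y → (HMaux τ).2 (f x) (f y)),
       fun f g => ∀ x, (HMaux σ).1 x → (HMaux τ).2 (f x) (g x)⟩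

/-- Hereditarily monotone functionals: the members of the type structure `Ω^mon`. -/
def HM (σ : Ty) : El σ → Prop := (HMaux σ).1

/-- The (pointwise) order of the hereditarily monotone type structure `Ω^mon`. -/
def LeHM (σ : Ty) : El σ → El σ → Prop := (HMaux σ).2

/-- Equality in the hereditarily monotone type structure `Ω^mon`. -/
def EqHM (σ : Ty) (f g : El σ) : Prop := LeHM σ f g ∧ LeHM σ g f

open Cardinal
/-! ### Auxiliary lemmas -/

theorem lt_omega1_iff {o : Ordinal} : o < ω₁ ↔ o.card ≤ ℵ₀ := by
  rw [← Cardinal.ord_aleph, Cardinal.lt_ord, ← Cardinal.succ_aleph0, Order.lt_succ_iff]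

theorem add_lt_omega1 {a b : Ordinal} (ha : a < ω₁) (hb : b < ω₁) : a + b < ω₁ := by
  rw [lt_omega1_iff] at ha hb ⊢
  rw [Ordinal.card_add]
  exact Cardinal.add_le_aleph0.2 ⟨ha, hb⟩

theorem countable_Iio {ζ : Ordinal} (hζ : ζ < ω₁) : (Set.Iio ζ).Countable := by
  rw [Cardinal.countable_iff_lt_aleph_one, Ordinal.mk_Iio_ordinal]
  rw [Cardinal.lift_lt_aleph_one, ← Cardinal.succ_aleph0, Order.lt_succ_iff]
  exact lt_omega1_iff.1 hζ

theorem bddAbove_of_countable {T : Set Ordinal} (hc : T.Countable) : BddAbove T := by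
  rcases T.eq_empty_or_nonempty with rfl | hne
  · exact bddAbove_empty
  · obtain ⟨g, rfl⟩ := hc.exists_eq_range hne
    exact Ordinal.bddAbove_range g

theorem sSup_lt_omega1 {T : Set Ordinal} (hc : T.Countable) (hT : ∀ o ∈ T, o < ω₁) :
    sSup T < ω₁ := by
  rcases T.eq_empty_or_nonempty with rfl | hne
  · rw [csSup_empty]; exact omega1_pos
  · obtain ⟨g, rfl⟩ := hc.exists_eq_range hne
    have : sSup (Set.range g) = iSup g := rfl
    rw [this]
    exact Ordinal.iSup_lt_omega_one (fun n => hT _ (Set.mem_range_self n))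

theorem val_lt (z : Om) : z.val < ω₁ := z.2

theorem om_le_iff {x y : Om} : x ≤ y ↔ x.val ≤ y.val := Iff.rfl

theorem sSup_val_lt {S : Set Om} (hc : S.Countable) : sSup (Subtype.val '' S) < ω₁ :=
  sSup_lt_omega1 (hc.image _) (by rintro _ ⟨w, _, rfl⟩; exact w.2)

theorem supOm_le {S : Set Om} {y : Om} (h : ∀ z ∈ S, z ≤ y) : supOm S ≤ y := by
  unfold supOm
  split
  · show sSup (Subtype.val '' S) ≤ y.val
    refine csSup_le' ?_
    rintro _ ⟨z, hz, rfl⟩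
    exact h z hz
  · exact zero_le (a := y.val)

theorem le_supOm {S : Set Om} (hc : S.Countable) {z : Om} (hz : z ∈ S) : z ≤ supOm S := by
  unfold supOm
  rw [dif_pos (sSup_val_lt hc)]
  show z.val ≤ sSup (Subtype.val '' S)
  exact le_csSup (bddAbove_of_countable ((hc.image _))) (Set.mem_image_of_mem _ hz)

theorem infOm_le {S : Set Om} {z : Om} (hz : z ∈ S) : infOm S ≤ z :=
  show sInf (Subtype.val '' S) ≤ z.val from csInf_le' (Set.mem_image_of_mem Subtype.val hz)

theorem le_infOm {S : Set Om} {y : Om} (hS : S.Nonempty) (h : ∀ z ∈ S, y ≤ z) : y ≤ infOm S := by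
  show y.val ≤ sInf (Subtype.val '' S)
  refine le_csInf (hS.image Subtype.val) ?_
  rintro _ ⟨z, hz, rfl⟩
  exact h z hz

theorem infOm_mem {S : Set Om} (hS : S.Nonempty) : infOm S ∈ S := by
  obtain ⟨z, hz, he⟩ := csInf_mem (hS.image Subtype.val)
  have : infOm S = z := Subtype.ext he.symm
  rwa [this]

/-- The set of values of a tail of a ζ-indexed family. -/
def tailSet {ζ : Ordinal} (F : ∀ ξ, ξ < ζ → Om) (γ : Ordinal) : Set Om :=
  {z | ∃ ξ, ∃ h : ξ < ζ, γ ≤ ξ ∧ z = F ξ h}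

theorem limsupBase (ζ : Ordinal) (F : ∀ ξ, ξ < ζ → Om) :
    limsupEl .base ζ F = infOm {y | ∃ γ, ∃ _ : γ < ζ, y = supOm (tailSet F γ)} := rfl

theorem countable_of_indexed {ζ : Ordinal} (hζ : ζ < ω₁) (Fim : Ordinal → Om) {S : Set Om}
    (h : ∀ z ∈ S, ∃ ξ < ζ, z = Fim ξ) : S.Countable := by
  refine ((countable_Iio hζ).image Fim).mono ?_
  rintro z hz
  obtain ⟨ξ, hξ, rfl⟩ := h z hz
  exact ⟨ξ, hξ, rfl⟩

theorem tailSet_countable {ζ : Ordinal} (hζ : ζ < ω₁) (F : ∀ ξ, ξ < ζ → Om) (γ : Ordinal) :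
    (tailSet F γ).Countable := by
  refine countable_of_indexed hζ (fun ξ => if h : ξ < ζ then F ξ h else ⟨0, omega1_pos⟩) ?_
  rintro z ⟨ξ, h, hγ, rfl⟩
  exact ⟨ξ, h, (dif_pos h).symm⟩

theorem limsupSet_countable {ζ : Ordinal} (hζ : ζ < ω₁) (F : ∀ ξ, ξ < ζ → Om) :
    {y | ∃ γ, ∃ _ : γ < ζ, y = supOm (tailSet F γ)}.Countable := by
  refine countable_of_indexed hζ (fun γ => supOm (tailSet F γ)) ?_
  rintro z ⟨γ, h, rfl⟩
  exact ⟨γ, h, rfl⟩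

theorem limsupBase_mono {ζ : Ordinal} (hζ : ζ < ω₁) {F G : ∀ ξ, ξ < ζ → Om}
    (h : ∀ ξ (hh : ξ < ζ), F ξ hh ≤ G ξ hh) :
    limsupEl .base ζ F ≤ limsupEl .base ζ G := by
  rw [limsupBase, limsupBase]
  rcases eq_or_ne ζ 0 with rfl | hne
  · have he : ∀ (H : ∀ ξ, ξ < (0 : Ordinal) → Om),
        {y | ∃ γ, ∃ _ : γ < (0 : Ordinal), y = supOm (tailSet H γ)} = (∅ : Set Om) := by
      intro H; ext y; simp [not_lt_zero]
    rw [he F, he G]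
  · have h0 : 0 < ζ := pos_iff_ne_zero.2 hne
    refine le_infOm ⟨_, ⟨0, h0, rfl⟩⟩ ?_
    rintro z ⟨γ, hγ, rfl⟩
    refine le_trans (infOm_le ⟨γ, hγ, rfl⟩) (supOm_le ?_)
    rintro w ⟨ξ, hξ, hγξ, rfl⟩
    exact le_trans (h ξ hξ) (le_supOm (tailSet_countable hζ G γ) ⟨ξ, hξ, hγξ, rfl⟩)

theorem le_limsupBase {ζ : Ordinal} (hζ : ζ < ω₁) (h0 : 0 < ζ) {c : Om} {F : ∀ ξ, ξ < ζ → Om}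
    (h : ∀ ξ (hh : ξ < ζ), c ≤ F ξ hh) : c ≤ limsupEl .base ζ F := by
  rw [limsupBase]
  refine le_infOm ⟨_, ⟨0, h0, rfl⟩⟩ ?_
  rintro z ⟨γ, hγ, rfl⟩
  exact le_trans (h γ hγ) (le_supOm (tailSet_countable hζ F γ) ⟨γ, hγ, le_refl γ, rfl⟩)

theorem el_congr {σ : Ty} {ζ : Ordinal} (G : ∀ η, η < ζ → El σ) {η η' : Ordinal}
    (e : η = η') (h : η < ζ) (h' : η' < ζ) : G η h = G η' h' := by cases e; rfl

theorem tailSet_shift {γ μ : Ordinal} (G : ∀ η, η < γ + μ → Om) (γ' : Ordinal) :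
    tailSet (fun ξ (h : ξ < μ) => G (γ + ξ) ((add_lt_add_iff_left γ).2 h)) γ'
      = tailSet G (γ + γ') := by
  ext z
  constructor
  · rintro ⟨ξ, h, hγ', rfl⟩
    exact ⟨γ + ξ, _, add_le_add_right hγ' γ, rfl⟩
  · rintro ⟨η, h, hγ', hz⟩
    have hγη : γ ≤ η := le_trans (le_self_add (a := γ) (b := γ')) hγ'
    have e : γ + (η - γ) = η := Ordinal.add_sub_cancel_of_le hγη
    have h1 : η - γ < μ := by rw [← add_lt_add_iff_left γ, e]; exact h
    have h2 : γ' ≤ η - γ := by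
      rw [← add_le_add_iff_left (a := γ), e]; exact hγ'
    exact ⟨η - γ, h1, h2, by rw [hz]; exact (el_congr (σ := .base) G e.symm h _)⟩

theorem limsupBase_shift {γ μ : Ordinal} (hμ : Order.IsSuccLimit μ) (hb : γ + μ < ω₁)
    (G : ∀ η, η < γ + μ → Om) :
    limsupEl .base (γ + μ) G
      = limsupEl .base μ (fun ξ h => G (γ + ξ) ((add_lt_add_iff_left γ).2 h)) := by
  rw [limsupBase, limsupBase]
  set F : ∀ ξ, ξ < μ → Om := fun ξ h => G (γ + ξ) ((add_lt_add_iff_left γ).2 h) with hF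
  have hpos : (0 : Ordinal) < γ + μ := lt_of_lt_of_le hμ.pos (le_add_self (a := μ) (b := γ))
  apply le_antisymm
  · refine le_infOm ⟨_, ⟨0, hμ.pos, rfl⟩⟩ ?_
    rintro z ⟨γ', hγ', rfl⟩
    refine infOm_le ⟨γ + γ', (add_lt_add_iff_left γ).2 hγ', ?_⟩
    rw [hF, tailSet_shift]
  · have hne : {y | ∃ γ', ∃ _ : γ' < μ, y = supOm (tailSet F γ')}.Nonempty :=
      ⟨_, ⟨0, hμ.pos, rfl⟩⟩
    obtain ⟨γ', hγ', he⟩ := infOm_mem hne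
    refine le_infOm ⟨_, ⟨0, hpos, rfl⟩⟩ ?_
    rintro z ⟨δ, hδ, rfl⟩
    rcases le_total δ γ with hle | hle
    · have h1 : infOm {y | ∃ γ', ∃ _ : γ' < μ, y = supOm (tailSet F γ')}
          ≤ supOm (tailSet G γ) := by
        have e2 : supOm (tailSet F 0) = supOm (tailSet G γ) := by
          rw [hF, tailSet_shift, add_zero]
        exact e2 ▸ infOm_le ⟨0, hμ.pos, rfl⟩
      refine le_trans h1 (supOm_le ?_)
      rintro w ⟨η, hh, hge, rfl⟩
      exact le_supOm (tailSet_countable hb G δ) ⟨η, hh, le_trans hle hge, rfl⟩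
    · have e : γ + (δ - γ) = δ := Ordinal.add_sub_cancel_of_le hle
      have h1 : δ - γ < μ := by rw [← add_lt_add_iff_left γ, e]; exact hδ
      refine infOm_le ⟨δ - γ, h1, ?_⟩
      rw [hF, tailSet_shift, e]

theorem supEl_arrow_apply (σ τ : Ty) (S : Set (El (.arrow σ τ))) (x : El σ) :
    supEl (.arrow σ τ) S x = supEl τ ((fun f : El (.arrow σ τ) => f x) '' S) := rfl

theorem limsupEl_apply (σ τ : Ty) (ζ : Ordinal) (F : ∀ ξ, ξ < ζ → El (.arrow σ τ)) (x : El σ) :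
    limsupEl (.arrow σ τ) ζ F x = limsupEl τ ζ (fun ξ h => F ξ h x) := by
  show infEl τ _ = infEl τ _
  congr 1
  ext w
  constructor
  · rintro ⟨y, ⟨γ, hγ, rfl⟩, rfl⟩
    refine ⟨γ, hγ, ?_⟩
    show supEl τ _ = supEl τ _
    congr 1
    ext v
    constructor
    · rintro ⟨z, ⟨ξ, h, hγξ, rfl⟩, rfl⟩
      exact ⟨ξ, h, hγξ, rfl⟩
    · rintro ⟨ξ, h, hγξ, rfl⟩
      exact ⟨F ξ h, ⟨ξ, h, hγξ, rfl⟩, rfl⟩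
  · rintro ⟨γ, hγ, rfl⟩
    refine ⟨supEl (.arrow σ τ) {z | ∃ ξ, ∃ h : ξ < ζ, γ ≤ ξ ∧ z = F ξ h}, ⟨γ, hγ, rfl⟩, ?_⟩
    show supEl τ _ = supEl τ _
    congr 1
    ext v
    constructor
    · rintro ⟨z, ⟨ξ, h, hγξ, rfl⟩, rfl⟩
      exact ⟨ξ, h, hγξ, rfl⟩
    · rintro ⟨ξ, h, hγξ, rfl⟩
      exact ⟨F ξ h, ⟨ξ, h, hγξ, rfl⟩, rfl⟩

theorem Hp_base (x : El .base) : Hp .base x := trivial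

theorem Hp_arrow_ne {ρ τ : Ty} (h : ρ ≠ τ) (f : El (.arrow ρ τ)) : Hp (.arrow ρ τ) f := by
  simp [Hp, HPaux, h]

theorem Hp_arrow_eq (ρ : Ty) (f : El (.arrow ρ ρ)) :
    Hp (.arrow ρ ρ) f ↔
      (∀ x, Hp ρ x → Hp ρ (f x)) ∧ (∀ x, Hp ρ x → HpLe ρ x (f x)) ∧
      (∀ x y, Hp ρ x → Hp ρ y → HpLe ρ x y → HpLe ρ (f x) (f y)) := by
  show (if h : ρ = ρ then _ else True) ↔ _
  rw [dif_pos rfl]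
  constructor
  · rintro ⟨h1, h2, h3⟩
    exact ⟨h1, fun x hx => by simpa [cast_eq, HpLe] using h2 x hx, h3⟩
  · rintro ⟨h1, h2, h3⟩
    exact ⟨h1, fun x hx => by simpa [cast_eq, HpLe] using h2 x hx, h3⟩

theorem HpLe_arrow_eq (ρ : Ty) (f g : El (.arrow ρ ρ)) :
    HpLe (.arrow ρ ρ) f g ↔ ∀ x, Hp ρ x → HpLe ρ (f x) (g x) := by
  show (if ρ = ρ then _ else _) ↔ _
  rw [if_pos rfl]
  exact Iff.rfl

theorem HpLe_arrow_ne {ρ τ : Ty} (h : ρ ≠ τ) (f g : El (.arrow ρ τ)) :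
    HpLe (.arrow ρ τ) f g ↔ Le (.arrow ρ τ) f g := by
  show (if ρ = τ then _ else _) ↔ _
  rw [if_neg h]

theorem Le_refl : ∀ (σ : Ty) (x : El σ), Le σ x x := by
  intro σ
  induction σ with
  | base => exact fun x => le_refl x
  | arrow σ τ ihσ ihτ => exact fun f x => ihτ (f x)

theorem HpLe_refl : ∀ (σ : Ty) (x : El σ), HpLe σ x x := by
  intro σ
  induction σ with
  | base => exact fun x => le_refl x
  | arrow σ τ ihσ ihτ =>
    intro f
    by_cases h : σ = τ
    · subst h
      rw [HpLe_arrow_eq]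
      exact fun x _ => ihτ (f x)
    · rw [HpLe_arrow_ne h]
      exact Le_refl _ f

theorem le_limsup_mono : ∀ (σ : Ty) {ζ : Ordinal}, ζ < ω₁ → ∀ {F G : ∀ ξ, ξ < ζ → El σ},
    (∀ ξ (hh : ξ < ζ), Le σ (F ξ hh) (G ξ hh)) → Le σ (limsupEl σ ζ F) (limsupEl σ ζ G) := by
  intro σ
  induction σ with
  | base =>
    intro ζ hζ F G h
    exact limsupBase_mono hζ h
  | arrow σ τ ihσ ihτ =>
    intro ζ hζ F G h x
    rw [limsupEl_apply, limsupEl_apply]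
    exact ihτ hζ (fun ξ hh => h ξ hh x)

theorem hpLe_limsup_mono : ∀ (σ : Ty) {ζ : Ordinal}, ζ < ω₁ → ∀ {F G : ∀ ξ, ξ < ζ → El σ},
    (∀ ξ (hh : ξ < ζ), HpLe σ (F ξ hh) (G ξ hh)) → HpLe σ (limsupEl σ ζ F) (limsupEl σ ζ G) := by
  intro σ
  induction σ with
  | base =>
    intro ζ hζ F G h
    exact limsupBase_mono hζ h
  | arrow σ τ ihσ ihτ =>
    intro ζ hζ F G h
    by_cases hc : σ = τ
    · subst hc
      rw [HpLe_arrow_eq]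
      intro x hx
      rw [limsupEl_apply, limsupEl_apply]
      exact ihτ hζ (fun ξ hh => (HpLe_arrow_eq σ _ _).1 (h ξ hh) x hx)
    · rw [HpLe_arrow_ne hc]
      intro x
      rw [limsupEl_apply, limsupEl_apply]
      exact le_limsup_mono τ hζ (fun ξ hh => (HpLe_arrow_ne hc _ _).1 (h ξ hh) x)

theorem le_limsup_of_le : ∀ (σ : Ty) {ζ : Ordinal}, ζ < ω₁ → 0 < ζ → ∀ {c : El σ}
    {F : ∀ ξ, ξ < ζ → El σ},
    (∀ ξ (hh : ξ < ζ), Le σ c (F ξ hh)) → Le σ c (limsupEl σ ζ F) := by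
  intro σ
  induction σ with
  | base =>
    intro ζ hζ h0 c F h
    exact le_limsupBase hζ h0 h
  | arrow σ τ ihσ ihτ =>
    intro ζ hζ h0 c F h x
    rw [limsupEl_apply]
    exact ihτ hζ h0 (fun ξ hh => h ξ hh x)

theorem hpLe_limsup_of_le : ∀ (σ : Ty) {ζ : Ordinal}, ζ < ω₁ → 0 < ζ → ∀ {c : El σ}
    {F : ∀ ξ, ξ < ζ → El σ},
    (∀ ξ (hh : ξ < ζ), HpLe σ c (F ξ hh)) → HpLe σ c (limsupEl σ ζ F) := by
  intro σ
  induction σ with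
  | base =>
    intro ζ hζ h0 c F h
    exact le_limsupBase hζ h0 h
  | arrow σ τ ihσ ihτ =>
    intro ζ hζ h0 c F h
    by_cases hc : σ = τ
    · subst hc
      rw [HpLe_arrow_eq]
      intro x hx
      rw [limsupEl_apply]
      exact ihτ hζ h0 (fun ξ hh => (HpLe_arrow_eq σ _ _).1 (h ξ hh) x hx)
    · rw [HpLe_arrow_ne hc]
      intro x
      rw [limsupEl_apply]
      exact le_limsup_of_le τ hζ h0 (fun ξ hh => (HpLe_arrow_ne hc _ _).1 (h ξ hh) x)

theorem hp_limsup : ∀ (σ : Ty) {ζ : Ordinal}, ζ < ω₁ → 0 < ζ → ∀ {F : ∀ ξ, ξ < ζ → El σ},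
    (∀ ξ (hh : ξ < ζ), Hp σ (F ξ hh)) → Hp σ (limsupEl σ ζ F) := by
  intro σ
  induction σ with
  | base =>
    intro ζ hζ h0 F h
    exact trivial
  | arrow σ τ ihσ ihτ =>
    intro ζ hζ h0 F h
    by_cases hc : σ = τ
    · subst hc
      rw [Hp_arrow_eq]
      refine ⟨?_, ?_, ?_⟩
      · intro x hx
        rw [limsupEl_apply]
        exact ihτ hζ h0 (fun ξ hh => ((Hp_arrow_eq σ _).1 (h ξ hh)).1 x hx)
      · intro x hx
        rw [limsupEl_apply]
        exact hpLe_limsup_of_le σ hζ h0 (fun ξ hh => ((Hp_arrow_eq σ _).1 (h ξ hh)).2.1 x hx)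
      · intro x y hx hy hxy
        rw [limsupEl_apply, limsupEl_apply]
        exact hpLe_limsup_mono σ hζ
          (fun ξ hh => ((Hp_arrow_eq σ _).1 (h ξ hh)).2.2 x y hx hy hxy)
    · exact Hp_arrow_ne hc _

theorem limsup_shift : ∀ (σ : Ty) {γ μ : Ordinal}, Order.IsSuccLimit μ → γ + μ < ω₁ →
    ∀ (G : ∀ η, η < γ + μ → El σ),
    limsupEl σ (γ + μ) G
      = limsupEl σ μ (fun ξ h => G (γ + ξ) ((add_lt_add_iff_left γ).2 h)) := by
  intro σ
  induction σ with
  | base => exact fun hμ hb G => limsupBase_shift hμ hb G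
  | arrow σ τ ihσ ihτ =>
    intro γ μ hμ hb G
    funext x
    rw [limsupEl_apply, limsupEl_apply]
    exact ihτ hμ hb (fun η h => G η h x)

theorem Iter_zero (σ : Ty) (f : El σ → El σ) (x : El σ) : Iter σ 0 f x = x := by
  unfold Iter
  rw [Ordinal.limitRecOn_zero]

theorem Iter_succ (σ : Ty) (α : Ordinal) (f : El σ → El σ) (x : El σ) :
    Iter σ (Order.succ α) f x = f (Iter σ α f x) := by
  unfold Iter
  rw [Ordinal.limitRecOn_succ]

theorem Iter_limit (σ : Ty) {μ : Ordinal} (hμ : Order.IsSuccLimit μ) (f : El σ → El σ)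
    (x : El σ) : Iter σ μ f x = limsupEl σ μ (fun ξ _ => Iter σ ξ f x) := by
  unfold Iter
  rw [Ordinal.limitRecOn_limit _ _ _ _ hμ]

theorem hp_Iter (σ : Ty) {f : El σ → El σ} (hf : Hp (.arrow σ σ) f) {α : Ordinal}
    (hα : α < ω₁) {x : El σ} (hx : Hp σ x) : Hp σ (Iter σ α f x) := by
  revert hα
  induction α using Ordinal.limitRecOn with
  | zero =>
    intro _
    rw [Iter_zero]
    exact hx
  | add_one β ih =>
    intro hα
    rw [Ordinal.add_one_eq_succ] at hα ⊢
    rw [Iter_succ]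
    exact ((Hp_arrow_eq σ f).1 hf).1 _ (ih ((Order.lt_succ β).trans hα))
  | limit μ hμ ih =>
    intro hα
    rw [Iter_limit σ hμ]
    exact hp_limsup σ hα hμ.pos (fun ξ hh => ih ξ hh (hh.trans hα))

/-- For h.p. `f ∈ Ω_{τ→τ}` and h.p. `x ∈ Ω_τ`, and countable ordinals
`α`, `γ`: `Iter_α^τ f (Iter_γ^τ f x) =hp Iter_{γ+α}^τ f x`. -/
theorem iter_comp_hpEq_iter_add (τ : Ty) (f : El (.arrow τ τ)) (hf : Hp (.arrow τ τ) f)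
    (x : El τ) (hx : Hp τ x) (α γ : Ordinal) (hα : α < ω₁) (hγ : γ < ω₁) :
    HpEq τ (Iter τ α f (Iter τ γ f x)) (Iter τ (γ + α) f x) := by
  revert hα
  induction α using Ordinal.limitRecOn with
  | zero =>
    intro _
    rw [Iter_zero, add_zero]
    exact ⟨HpLe_refl τ _, HpLe_refl τ _⟩
  | add_one β ih =>
    intro hα
    rw [Ordinal.add_one_eq_succ] at hα ⊢
    have hβ : β < ω₁ := (Order.lt_succ β).trans hα
    obtain ⟨h1, h2⟩ := ih hβ
    have hpY : Hp τ (Iter τ γ f x) := hp_Iter τ hf hγ hx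
    have hpA : Hp τ (Iter τ β f (Iter τ γ f x)) := hp_Iter τ hf hβ hpY
    have hpB : Hp τ (Iter τ (γ + β) f x) := hp_Iter τ hf (add_lt_omega1 hγ hβ) hx
    rw [Ordinal.add_succ, Iter_succ, Iter_succ]
    have hmono := ((Hp_arrow_eq τ f).1 hf).2.2
    exact ⟨hmono _ _ hpA hpB h1, hmono _ _ hpB hpA h2⟩
  | limit μ hμ ih =>
    intro hα
    have hadd : γ + μ < ω₁ := add_lt_omega1 hγ hα
    rw [Iter_limit τ hμ, Iter_limit τ (Ordinal.isSuccLimit_add γ hμ), limsup_shift τ hμ hadd]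
    constructor
    · exact hpLe_limsup_mono τ hα (fun ξ hh => (ih ξ hh (hh.trans hα)).1)
    · exact hpLe_limsup_mono τ hα (fun ξ hh => (ih ξ hh (hh.trans hα)).2)
end IterOrd
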